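/- arXiv:1006.4541 — 4 statements merged into one kernel-verified Lean document; each statement's English description precedes it below -/
import Mathlib

section
/- Let D be a *-subalgebra of B(H) for a complex Hilbert space H, let δ be a symmetric derivation with domain D, and let Ω ∈ H be a unit vector that is cyclic for D (i.e. {AΩ : A ∈ D} is dense in H). Denote ω(x) = ⟨Ω, xΩ⟩. Suppose there is a constant L ≥ 0 such that |ω(δ(A))| ≤ L·(ω(A*A) + ω(AA*))^{1/2} for all A ∈ D. Then there exists a symmetric linear operator T on H with domain Dom(T) = {BΩ : B ∈ D} such that δ(A)(BΩ) = i·(T(ABΩ) − A·T(BΩ)) for all A, B ∈ D, i.e. δ(A)ψ = i[T, A]ψ for all ψ ∈ Dom(T). -/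
set_option maxHeartbeats 1000000

open ComplexConjugate

namespace BRAux

variable {H : Type*} [NormedAddCommGroup H] [InnerProductSpace ℂ H] [CompleteSpace H]
variable (D : NonUnitalStarSubalgebra ℂ (H →L[ℂ] H)) (Ω : H)

/-- Evaluation at `Ω`. -/
noncomputable def ev : D →ₗ[ℂ] H where
  toFun B := (B : H →L[ℂ] H) Ω
  map_add' A B := rfl
  map_smul' c B := rfl

/-- The real-linear map `C ↦ (CΩ, C*Ω)` into the `L²` product. -/
noncomputable def jmap : D →ₗ[ℝ] WithLp 2 (H × H) where
  toFun C := (WithLp.equiv 2 (H × H)).symm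
    ((C : H →L[ℂ] H) Ω, ((star C : D) : H →L[ℂ] H) Ω)
  map_add' A B := by
    apply (WithLp.equiv 2 (H × H)).injective
    ext <;> simp [star_add]
  map_smul' r C := by
    apply (WithLp.equiv 2 (H × H)).injective
    have h1 : ((r • C : D) : H →L[ℂ] H) = (r : ℂ) • (C : H →L[ℂ] H) := rfl
    have h2 : (star (r • C) : D) = r • (star C : D) := by
      rw [star_smul, star_trivial]
    ext <;> simp [h1, h2]

theorem jmap_fst (C : D) : (jmap D Ω C).fst = (C : H →L[ℂ] H) Ω := rfl
theorem jmap_snd (C : D) : (jmap D Ω C).snd = ((star C : D) : H →L[ℂ] H) Ω := rfl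

theorem exists_u (L : ℝ) (F : D →ₗ[ℂ] ℂ)
    (hFb : ∀ C : D, ‖F C‖ ≤ L * ‖jmap D Ω C‖)
    (hFstar : ∀ C : D, F (star C) = conj (F C)) :
    ∃ u : H, ∀ C : D, F C = inner ℂ u ((C : H →L[ℂ] H) Ω)
      + conj (inner ℂ u (((star C : D) : H →L[ℂ] H) Ω) : ℂ) := by
  letI : InnerProductSpace ℝ H := InnerProductSpace.complexToReal
  -- the real part of `F` as a real-linear functional
  let f : D →ₗ[ℝ] ℝ := Complex.reLm.comp (F.restrictScalars ℝ)
  have hf : ∀ C : D, f C = (F C).re := fun _ => rfl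
  have hker : LinearMap.ker (jmap D Ω) ≤ LinearMap.ker f := by
    intro C hC
    have h0 : ‖jmap D Ω C‖ = 0 := by
      rw [LinearMap.mem_ker] at hC; rw [hC, norm_zero]
    have := hFb C
    rw [h0, mul_zero] at this
    have hFC : F C = 0 := norm_le_zero_iff.mp this
    simp [LinearMap.mem_ker, hf, hFC]
  -- the induced functional on the range of `jmap`
  let g0 : (LinearMap.range (jmap D Ω)) →ₗ[ℝ] ℝ :=
    (Submodule.liftQ _ f hker).comp (jmap D Ω).quotKerEquivRange.symm.toLinearMap
  have hg0 : ∀ C : D, ∀ h, g0 ⟨jmap D Ω C, h⟩ = f C := by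
    intro C h
    show Submodule.liftQ _ f hker ((jmap D Ω).quotKerEquivRange.symm ⟨jmap D Ω C, h⟩) = f C
    rw [LinearMap.quotKerEquivRange_symm_apply_image]
    simp
  have hbd : ∀ x : (LinearMap.range (jmap D Ω)), ‖g0 x‖ ≤ L * ‖x‖ := by
    rintro ⟨x, hx⟩
    obtain ⟨C, rfl⟩ := hx
    erw [hg0 C, hf]
    calc |(F C).re| ≤ ‖F C‖ := Complex.abs_re_le_norm _
      _ ≤ L * ‖jmap D Ω C‖ := hFb C
  let G : (LinearMap.range (jmap D Ω)) →L[ℝ] ℝ := LinearMap.mkContinuous g0 L hbd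
  obtain ⟨g, hg, -⟩ := exists_extension_norm_eq (LinearMap.range (jmap D Ω)) G
  set v : WithLp 2 (H × H) := (InnerProductSpace.toDual ℝ (WithLp 2 (H × H))).symm g with hv
  have hvx : ∀ x : WithLp 2 (H × H), (inner ℝ v x : ℝ) = g x := fun x =>
    InnerProductSpace.toDual_symm_apply
  -- the real identity
  have hre : ∀ C : D, (F C).re
      = (inner ℂ v.fst ((C : H →L[ℂ] H) Ω) : ℂ).re
        + (inner ℂ v.snd (((star C : D) : H →L[ℂ] H) Ω) : ℂ).re := by
    intro C
    have h1 : (F C).re = g (jmap D Ω C) := by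
      rw [← hf, ← hg0 C ⟨C, rfl⟩]
      exact (hg ⟨jmap D Ω C, ⟨C, rfl⟩⟩).symm
    have hri : ∀ a b : H, (inner ℝ a b : ℝ) = (inner ℂ a b : ℂ).re := fun a b => rfl
    rw [h1, ← hvx, WithLp.prod_inner_apply, hri, hri]
    rfl
  -- the complex identity
  have hcx : ∀ C : D, F C = inner ℂ v.fst ((C : H →L[ℂ] H) Ω)
      + conj (inner ℂ v.snd (((star C : D) : H →L[ℂ] H) Ω) : ℂ) := by
    intro C
    have hIC : F (Complex.I • C) = Complex.I * F C := by rw [map_smul]; rfl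
    have h2 : ((Complex.I • C : D) : H →L[ℂ] H) Ω = Complex.I • ((C : H →L[ℂ] H) Ω) := rfl
    have h3 : ((star (Complex.I • C) : D) : H →L[ℂ] H) Ω
        = (-Complex.I) • (((star C : D) : H →L[ℂ] H) Ω) := by
      rw [star_smul]
      simp [Complex.star_def, Complex.conj_I]
    have hre1 := hre C
    have hre2 := hre (Complex.I • C)
    rw [hIC, h2, h3, inner_smul_right, inner_smul_right] at hre2
    apply Complex.ext
    · rw [Complex.add_re, Complex.conj_re]; exact hre1
    · simp only [Complex.mul_re, Complex.I_re, Complex.I_im, Complex.add_re, Complex.neg_re,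
        Complex.neg_im] at hre2 ⊢
      simp only [Complex.add_im, Complex.conj_im, Complex.conj_re]
      nlinarith [hre2]
  refine ⟨(2 : ℂ)⁻¹ • (v.fst + v.snd), fun C => ?_⟩
  have e1 := hcx C
  have e2 := hcx (star C)
  rw [hFstar C, star_star] at e2
  have e2' : F C = conj (inner ℂ v.fst (((star C : D) : H →L[ℂ] H) Ω) : ℂ)
      + inner ℂ v.snd ((C : H →L[ℂ] H) Ω) := by
    have := congrArg conj e2
    simpa [map_add] using this
  simp only [inner_smul_left, inner_add_left, map_add, map_mul]
  simp only [map_inv₀, map_ofNat]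
  linear_combination (2:ℂ)⁻¹ * e1 + (2:ℂ)⁻¹ * e2'

end BRAux
/-- Proposition 3.1 (Bratteli–Robinson): Let `δ` be a symmetric derivation on a
`*`-subalgebra `D` of `B(H)`, let `Ω` be a unit cyclic vector for `D` and set
`ω(x) = ⟨Ω, xΩ⟩`.  If `|ω(δ(A))| ≤ L (ω(A*A) + ω(AA*))^{1/2}` for all `A ∈ D`, then
there is a symmetric operator `T` with domain `{BΩ : B ∈ D}` such that
`δ(A)ψ = i[T, A]ψ` for `ψ` in the domain of `T`. -/
theorem derivation_implemented_of_state_bound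
    {H : Type*} [NormedAddCommGroup H] [InnerProductSpace ℂ H] [CompleteSpace H]
    (D : NonUnitalStarSubalgebra ℂ (H →L[ℂ] H)) (δ : D →ₗ[ℂ] (H →L[ℂ] H))
    (hLeib : ∀ A B : D, δ (A * B) = δ A * (B : H →L[ℂ] H) + (A : H →L[ℂ] H) * δ B)
    (hSym : ∀ A : D, δ (star A) = star (δ A))
    (Ω : H) (hΩ : ‖Ω‖ = 1)
    -- `Ω` is cyclic for `D`
    (hcyclic : Dense {x : H | ∃ B : D, (B : H →L[ℂ] H) Ω = x})
    -- the state bound `|ω(δ(A))| ≤ L (ω(A*A) + ω(AA*))^{1/2}`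
    (L : ℝ) (hL : 0 ≤ L)
    (hbound : ∀ A : D, ‖(inner ℂ Ω (δ A Ω) : ℂ)‖ ≤
      L * Real.sqrt ((inner ℂ Ω (((star A * A : D) : H →L[ℂ] H) Ω) : ℂ).re +
        (inner ℂ Ω (((A * star A : D) : H →L[ℂ] H) Ω) : ℂ).re)) :
    ∃ T : H →ₗ.[ℂ] H,
      -- the domain of `T` is `{BΩ : B ∈ D}`
      (T.domain : Set H) = {x : H | ∃ B : D, (B : H →L[ℂ] H) Ω = x} ∧
      -- `T` is symmetric
      (∀ x y : T.domain, (inner ℂ (T x) (y : H) : ℂ) = inner ℂ (x : H) (T y)) ∧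
      -- `δ(A)ψ = i (T(Aψ) − A(Tψ))` for `ψ = BΩ` in the domain of `T`
      (∀ (A B : D) (hB : (B : H →L[ℂ] H) Ω ∈ T.domain)
        (hAB : ((A : H →L[ℂ] H) * B) Ω ∈ T.domain),
        δ A ((B : H →L[ℂ] H) Ω) =
          Complex.I • (T ⟨((A : H →L[ℂ] H) * B) Ω, hAB⟩ -
            (A : H →L[ℂ] H) (T ⟨(B : H →L[ℂ] H) Ω, hB⟩))) := by
  classical
  -- the state `ω ∘ δ` as a linear functional
  let F : D →ₗ[ℂ] ℂ :=
  { toFun := fun C => inner ℂ Ω (δ C Ω)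
    map_add' := by intro A B; simp [inner_add_right]
    map_smul' := by intro c A; simp [inner_smul_right] }
  -- the norm bound in terms of `jmap`
  have hFb : ∀ C : D, ‖F C‖ ≤ L * ‖BRAux.jmap D Ω C‖ := by
    intro C
    have h1 : (inner ℂ Ω (((star C * C : D) : H →L[ℂ] H) Ω) : ℂ).re
        = ‖(C : H →L[ℂ] H) Ω‖ ^ 2 := by
      have e : ((star C * C : D) : H →L[ℂ] H) Ω
          = (ContinuousLinearMap.adjoint (C : H →L[ℂ] H)) ((C : H →L[ℂ] H) Ω) := by
        rw [show ((star C * C : D) : H →L[ℂ] H)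
            = star (C : H →L[ℂ] H) * (C : H →L[ℂ] H) from rfl,
          ContinuousLinearMap.star_eq_adjoint]
        rfl
      rw [e, ContinuousLinearMap.adjoint_inner_right]
      rw [← RCLike.re_to_complex, inner_self_eq_norm_sq]
    have h2 : (inner ℂ Ω (((C * star C : D) : H →L[ℂ] H) Ω) : ℂ).re
        = ‖((star C : D) : H →L[ℂ] H) Ω‖ ^ 2 := by
      have e : ((C * star C : D) : H →L[ℂ] H) Ω
          = (C : H →L[ℂ] H) (((star C : D) : H →L[ℂ] H) Ω) := rfl
      have e2 : ((star C : D) : H →L[ℂ] H)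
          = ContinuousLinearMap.adjoint (C : H →L[ℂ] H) := by
        rw [show ((star C : D) : H →L[ℂ] H) = star (C : H →L[ℂ] H) from rfl,
          ContinuousLinearMap.star_eq_adjoint]
      rw [e, e2, ← ContinuousLinearMap.adjoint_inner_left]
      rw [← RCLike.re_to_complex, inner_self_eq_norm_sq, ← e2]
    have h3 : ‖BRAux.jmap D Ω C‖
        = Real.sqrt (‖(C : H →L[ℂ] H) Ω‖ ^ 2 + ‖((star C : D) : H →L[ℂ] H) Ω‖ ^ 2) := by
      rw [WithLp.prod_norm_eq_of_L2]
      rfl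
    have := hbound C
    rw [h1, h2] at this
    rw [h3]
    exact this
  -- the symmetry of `ω ∘ δ`
  have hFstar : ∀ C : D, F (star C) = (starRingEnd ℂ) (F C) := by
    intro C
    calc F (star C) = inner ℂ Ω (δ (star C) Ω) := rfl
      _ = inner ℂ Ω ((star (δ C)) Ω) := by rw [hSym]
      _ = inner ℂ Ω ((ContinuousLinearMap.adjoint (δ C)) Ω) := by
            rw [ContinuousLinearMap.star_eq_adjoint]
      _ = inner ℂ (δ C Ω) Ω := ContinuousLinearMap.adjoint_inner_right _ _ _
      _ = (starRingEnd ℂ) (inner ℂ Ω (δ C Ω)) := (inner_conj_symm _ _).symm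
  obtain ⟨u, hu⟩ := BRAux.exists_u D Ω L F hFb hFstar
  -- the candidate operator on `D`
  let S : D →ₗ[ℂ] H :=
  { toFun := fun B => (-Complex.I) • (δ B Ω) + (B : H →L[ℂ] H) (Complex.I • u)
    map_add' := by
      intro A B
      show (-Complex.I) • (δ (A + B) Ω) + ((A + B : D) : H →L[ℂ] H) (Complex.I • u) = _
      rw [map_add]
      show (-Complex.I) • (δ A Ω + δ B Ω)
        + ((A : H →L[ℂ] H) (Complex.I • u) + (B : H →L[ℂ] H) (Complex.I • u)) = _
      rw [smul_add]; abel
    map_smul' := by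
      intro c B
      show (-Complex.I) • (δ (c • B) Ω) + ((c • B : D) : H →L[ℂ] H) (Complex.I • u) = _
      rw [map_smul]
      show (-Complex.I) • (c • (δ B Ω)) + c • ((B : H →L[ℂ] H) (Complex.I • u)) = _
      rw [smul_comm]
      show _ = c • ((-Complex.I) • (δ B Ω) + (B : H →L[ℂ] H) (Complex.I • u))
      rw [smul_add] }
  have hSapp : ∀ B : D,
      S B = (-Complex.I) • (δ B Ω) + (B : H →L[ℂ] H) (Complex.I • u) := fun _ => rfl
  set ev := BRAux.ev D Ω with hev
  have hevapp : ∀ B : D, ev B = (B : H →L[ℂ] H) Ω := fun _ => rfl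
  -- the symmetry identity
  have hsymmS : ∀ A B : D, (inner ℂ (S A) (ev B) : ℂ) = inner ℂ (ev A) (S B) := by
    intro A B
    have key := hu (star A * B)
    have hC1 : ((star A * B : D) : H →L[ℂ] H) Ω
        = (ContinuousLinearMap.adjoint (A : H →L[ℂ] H)) ((B : H →L[ℂ] H) Ω) := by
      rw [show ((star A * B : D) : H →L[ℂ] H)
          = star (A : H →L[ℂ] H) * (B : H →L[ℂ] H) from rfl,
        ContinuousLinearMap.star_eq_adjoint]
      rfl
    have hC2 : ((star (star A * B) : D) : H →L[ℂ] H) Ω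
        = (ContinuousLinearMap.adjoint (B : H →L[ℂ] H)) ((A : H →L[ℂ] H) Ω) := by
      rw [star_mul, star_star]
      rw [show ((star B * A : D) : H →L[ℂ] H)
          = star (B : H →L[ℂ] H) * (A : H →L[ℂ] H) from rfl,
        ContinuousLinearMap.star_eq_adjoint]
      rfl
    have E1 : (inner ℂ (δ A Ω) ((B : H →L[ℂ] H) Ω) : ℂ)
        = F (star A * B) - inner ℂ ((A : H →L[ℂ] H) Ω) (δ B Ω) := by
      have hb : ContinuousLinearMap.adjoint (δ A) = (δ (star A) : H →L[ℂ] H) := by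
        rw [hSym, ContinuousLinearMap.star_eq_adjoint]
      have hc : (δ (star A) : H →L[ℂ] H) ((B : H →L[ℂ] H) Ω)
          = δ (star A * B) Ω - ((star A : D) : H →L[ℂ] H) (δ B Ω) := by
        have h := congrArg (fun X : H →L[ℂ] H => X Ω) (hLeib (star A) B)
        simp only [ContinuousLinearMap.add_apply, ContinuousLinearMap.mul_apply] at h
        rw [h]; abel
      calc (inner ℂ (δ A Ω) ((B : H →L[ℂ] H) Ω) : ℂ)
          = inner ℂ Ω ((ContinuousLinearMap.adjoint (δ A)) ((B : H →L[ℂ] H) Ω)) :=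
            (ContinuousLinearMap.adjoint_inner_right _ _ _).symm
        _ = inner ℂ Ω (δ (star A * B) Ω - ((star A : D) : H →L[ℂ] H) (δ B Ω)) := by
            rw [hb, hc]
        _ = F (star A * B) - inner ℂ Ω (((star A : D) : H →L[ℂ] H) (δ B Ω)) := by
            rw [inner_sub_right]; rfl
        _ = F (star A * B) - inner ℂ ((A : H →L[ℂ] H) Ω) (δ B Ω) := by
            rw [show ((star A : D) : H →L[ℂ] H) = star (A : H →L[ℂ] H) from rfl,
              ContinuousLinearMap.star_eq_adjoint, ContinuousLinearMap.adjoint_inner_right]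
    have E2 : (inner ℂ ((A : H →L[ℂ] H) u) ((B : H →L[ℂ] H) Ω) : ℂ)
        = inner ℂ u (((star A * B : D) : H →L[ℂ] H) Ω) := by
      rw [hC1, ContinuousLinearMap.adjoint_inner_right]
    have E3 : (inner ℂ ((A : H →L[ℂ] H) Ω) ((B : H →L[ℂ] H) u) : ℂ)
        = (starRingEnd ℂ) (inner ℂ u (((star (star A * B) : D) : H →L[ℂ] H) Ω)) := by
      rw [hC2, inner_conj_symm, ContinuousLinearMap.adjoint_inner_left]
    show (inner ℂ ((-Complex.I) • (δ A Ω) + (A : H →L[ℂ] H) (Complex.I • u))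
        ((B : H →L[ℂ] H) Ω) : ℂ)
      = inner ℂ ((A : H →L[ℂ] H) Ω)
        ((-Complex.I) • (δ B Ω) + (B : H →L[ℂ] H) (Complex.I • u))
    rw [map_smul, map_smul]
    simp only [inner_add_left, inner_add_right, inner_smul_left, inner_smul_right,
      map_neg, Complex.conj_I]
    linear_combination Complex.I * E1 - Complex.I * E2 - Complex.I * E3 + Complex.I * key
  -- `S` vanishes on the kernel of the evaluation map
  have hkerS : LinearMap.ker ev ≤ LinearMap.ker S := by
    intro B hB
    rw [LinearMap.mem_ker] at hB ⊢
    have hz : ∀ x ∈ {x : H | ∃ B : D, (B : H →L[ℂ] H) Ω = x},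
        (fun x : H => (inner ℂ x (S B) : ℂ)) x = (fun _ : H => (0 : ℂ)) x := by
      rintro x ⟨A, rfl⟩
      show (inner ℂ (ev A) (S B) : ℂ) = 0
      rw [← hsymmS A B, hB, inner_zero_right]
    have hcont : Continuous fun x : H => (inner ℂ x (S B) : ℂ) :=
      Continuous.inner continuous_id continuous_const
    have hfun := Continuous.ext_on hcyclic hcont continuous_const hz
    have := congrFun hfun (S B)
    simpa [inner_self_eq_zero] using this
  -- the partially defined operator
  let Tlin : (LinearMap.range ev) →ₗ[ℂ] H :=
    (Submodule.liftQ _ S hkerS).comp ev.quotKerEquivRange.symm.toLinearMap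
  have hTlin : ∀ (B : D) (h : ev B ∈ LinearMap.range ev), Tlin ⟨ev B, h⟩ = S B := by
    intro B h
    show Submodule.liftQ _ S hkerS (ev.quotKerEquivRange.symm ⟨ev B, h⟩) = S B
    rw [LinearMap.quotKerEquivRange_symm_apply_image]
    simp
  refine ⟨⟨LinearMap.range ev, Tlin⟩, ?_, ?_, ?_⟩
  · ext x
    constructor
    · rintro ⟨B, rfl⟩; exact ⟨B, rfl⟩
    · rintro ⟨B, rfl⟩; exact ⟨B, rfl⟩
  · rintro ⟨x, hx⟩ ⟨y, hy⟩
    obtain ⟨A, rfl⟩ := hx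
    obtain ⟨B, rfl⟩ := hy
    show (inner ℂ (Tlin ⟨ev A, _⟩) (ev B) : ℂ) = inner ℂ (ev A) (Tlin ⟨ev B, _⟩)
    erw [hTlin, hTlin]
    exact hsymmS A B
  · intro A B hB hAB
    have h1 : Tlin ⟨((A : H →L[ℂ] H) * B) Ω, hAB⟩ = S (A * B) := hTlin (A * B) hAB
    have h2 : Tlin ⟨(B : H →L[ℂ] H) Ω, hB⟩ = S B := hTlin B hB
    show δ A ((B : H →L[ℂ] H) Ω)
      = Complex.I • (Tlin ⟨((A : H →L[ℂ] H) * B) Ω, hAB⟩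
        - (A : H →L[ℂ] H) (Tlin ⟨(B : H →L[ℂ] H) Ω, hB⟩))
    rw [h1, h2]
    have hd : δ (A * B) Ω = δ A ((B : H →L[ℂ] H) Ω) + (A : H →L[ℂ] H) (δ B Ω) := by
      have h := congrArg (fun X : H →L[ℂ] H => X Ω) (hLeib A B)
      simpa only [ContinuousLinearMap.add_apply, ContinuousLinearMap.mul_apply] using h
    have hS1 : S (A * B) = (-Complex.I) • (δ A ((B : H →L[ℂ] H) Ω)
        + (A : H →L[ℂ] H) (δ B Ω))
        + (A : H →L[ℂ] H) ((B : H →L[ℂ] H) (Complex.I • u)) := by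
      rw [hSapp, hd]; rfl
    have hS2 : (A : H →L[ℂ] H) (S B) = (-Complex.I) • ((A : H →L[ℂ] H) (δ B Ω))
        + (A : H →L[ℂ] H) ((B : H →L[ℂ] H) (Complex.I • u)) := by
      rw [hSapp, map_add, map_smul]
    rw [hS1, hS2, smul_add]
    have : ∀ x y w : H, (-Complex.I) • x + (-Complex.I) • y + w
        - ((-Complex.I) • y + w) = (-Complex.I) • x := by
      intro x y w; abel
    rw [this, smul_smul]
    norm_num
end

section
/- Let T be a densely defined symmetric linear operator on a separable complex Hilbert space H whose deficiency indices are unequal, i.e. dim(Ran(T − i·I))^⊥ ≠ dim(Ran(T + i·I))^⊥. Then there exist a complex Hilbert space Ĥ, an isometric linear embedding ι : H → Ĥ, and a self-adjoint (possibly unbounded) operator K on Ĥ extending T, i.e. ι(Dom(T)) ⊆ Dom(K) and K(ι(u)) = ι(T u) for all u ∈ Dom(T). -/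
namespace NaimarkProof
open LinearPMap
noncomputable section
variable {H : Type*} [NormedAddCommGroup H] [InnerProductSpace ℂ H] [CompleteSpace H]

local notation "⟪" x ", " y "⟫" => @inner ℂ _ _ x y

variable (A : H →ₗ.[ℂ] H)

def Kdom : Submodule ℂ (WithLp 2 (H × H)) :=
  Submodule.comap (WithLp.linearEquiv 2 ℂ (H × H)).toLinearMap
    ((A.domain.prod A.domain) ⊓
      Submodule.comap (LinearMap.fst ℂ H H + LinearMap.snd ℂ H H) (A†.domain))

variable {A} in
theorem mem_Kdom {p : WithLp 2 (H × H)} :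
    p ∈ Kdom A ↔ (WithLp.linearEquiv 2 ℂ (H × H) p).1 ∈ A.domain ∧
      (WithLp.linearEquiv 2 ℂ (H × H) p).2 ∈ A.domain ∧
      (WithLp.linearEquiv 2 ℂ (H × H) p).1 + (WithLp.linearEquiv 2 ℂ (H × H) p).2 ∈ A†.domain := by
  simp [Kdom, Submodule.mem_prod, and_assoc]

def auxFst : Kdom A →ₗ[ℂ] A.domain :=
  LinearMap.codRestrict A.domain
    ((LinearMap.fst ℂ H H) ∘ₗ (WithLp.linearEquiv 2 ℂ (H × H)).toLinearMap ∘ₗ (Kdom A).subtype)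
    fun p => (mem_Kdom.mp p.2).1

def auxSnd : Kdom A →ₗ[ℂ] A.domain :=
  LinearMap.codRestrict A.domain
    ((LinearMap.snd ℂ H H) ∘ₗ (WithLp.linearEquiv 2 ℂ (H × H)).toLinearMap ∘ₗ (Kdom A).subtype)
    fun p => (mem_Kdom.mp p.2).2.1

def naimarkK : WithLp 2 (H × H) →ₗ.[ℂ] WithLp 2 (H × H) :=
  ⟨Kdom A, (WithLp.linearEquiv 2 ℂ (H × H)).symm.toLinearMap ∘ₗ
    ((A.toFun ∘ₗ auxFst A).prod (-(A.toFun ∘ₗ auxSnd A)))⟩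

theorem naimarkK_apply (x : (naimarkK A).domain) :
    naimarkK A x = (WithLp.linearEquiv 2 ℂ (H × H)).symm
      (A (auxFst A x), -(A (auxSnd A x))) := rfl

theorem coe_auxFst (A : H →ₗ.[ℂ] H) (x : (naimarkK A).domain) :
    ((auxFst A x : A.domain) : H) = (x : WithLp 2 (H × H)).fst := rfl

theorem coe_auxSnd (A : H →ₗ.[ℂ] H) (x : (naimarkK A).domain) :
    ((auxSnd A x : A.domain) : H) = (x : WithLp 2 (H × H)).snd := rfl


def iota : H →ₗᵢ[ℂ] WithLp 2 (H × H) where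
  toLinearMap := (WithLp.linearEquiv 2 ℂ (H × H)).symm.toLinearMap ∘ₗ LinearMap.inl ℂ H H
  norm_map' := fun x => by
    simpa using WithLp.norm_equiv_symm_fst 2 H H x

theorem iota_apply (x : H) : iota x = (WithLp.equiv 2 (H × H)).symm (x, 0) := rfl


variable {T : H →ₗ.[ℂ] H} (hdense : Dense (T.domain : Set H))
  (hsymm : ∀ x y : T.domain, ⟪T x, (y : H)⟫ = ⟪(x : H), T y⟫)

include hdense hsymm

theorem hTA : T ≤ T† :=
  IsFormalAdjoint.le_adjoint hdense (show T.IsFormalAdjoint T from hsymm)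

theorem hdenseA : Dense ((T†).domain : Set H) :=
  hdense.mono (hTA hdense hsymm).1

theorem hT_le_AA : T ≤ (T†)† :=
  IsFormalAdjoint.le_adjoint (hdenseA hdense hsymm) (adjoint_isFormalAdjoint hdense)

theorem hAA_le_A : (T†)† ≤ T† := by
  refine IsFormalAdjoint.le_adjoint hdense ?_
  intro x y
  have h1 := adjoint_isFormalAdjoint (hdenseA hdense hsymm) y
    ⟨(x : H), (hTA hdense hsymm).1 x.2⟩
  have hx : T x = T† ⟨(x : H), (hTA hdense hsymm).1 x.2⟩ := (hTA hdense hsymm).2 rfl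
  rw [← hx] at h1
  rw [← inner_conj_symm ((x:H)) ((T†)† y), h1, inner_conj_symm]

theorem key (z : ((T†)†).domain) (w : (T†).domain) :
    ⟪T† ⟨(z : H), (hAA_le_A hdense hsymm).1 z.2⟩, (w : H)⟫ = ⟪(z : H), T† w⟫ := by
  have h := adjoint_isFormalAdjoint (hdenseA hdense hsymm) z w
  rwa [show (T†)† z = T† ⟨(z : H), (hAA_le_A hdense hsymm).1 z.2⟩ from
    (hAA_le_A hdense hsymm).2 rfl] at h

theorem key' (z : ((T†)†).domain) (w : (T†).domain) :
    ⟪T† w, (z : H)⟫ = ⟪(w : H), T† ⟨(z : H), (hAA_le_A hdense hsymm).1 z.2⟩⟫ := by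
  rw [← inner_conj_symm, ← key hdense hsymm z w, inner_conj_symm]

theorem naimark_isSymm :
    (naimarkK (T†)).IsFormalAdjoint (naimarkK (T†)) := by
  intro x y
  have hxm : _ + _ ∈ ((T†)†).domain := (mem_Kdom.mp x.2).2.2
  have hym : _ + _ ∈ ((T†)†).domain := (mem_Kdom.mp y.2).2.2
  have hy1 : (⟨_, (hAA_le_A hdense hsymm).1 hym⟩ : (T†).domain)
      = auxFst (T†) y + auxSnd (T†) y := Subtype.ext rfl
  have hx1 : (⟨_, (hAA_le_A hdense hsymm).1 hxm⟩ : (T†).domain)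
      = auxFst (T†) x + auxSnd (T†) x := Subtype.ext rfl
  have h1 := key' hdense hsymm ⟨_, hym⟩ (auxFst (T†) x)
  have h2 := key hdense hsymm ⟨_, hxm⟩ (auxSnd (T†) y)
  rw [hy1] at h1
  rw [hx1] at h2
  rw [LinearPMap.map_add] at h1 h2
  rw [naimarkK_apply, naimarkK_apply, WithLp.prod_inner_apply, WithLp.prod_inner_apply]
  simp only [WithLp.linearEquiv_symm_apply, WithLp.toLp_fst, WithLp.toLp_snd, WithLp.equiv_symm_apply, AddEquiv.invFun_eq_symm, WithLp.coe_symm_addEquiv,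
    inner_neg_left, inner_neg_right, Submodule.coe_add, inner_add_left, inner_add_right,
    coe_auxFst, coe_auxSnd, WithLp.linearEquiv_apply, WithLp.ofLp_fst, WithLp.ofLp_snd, AddEquiv.toFun_eq_coe, WithLp.coe_addEquiv, WithLp.equiv_apply] at *
  linear_combination h1 - h2

theorem mem1 (x : T.domain) :
    (WithLp.equiv 2 (H × H)).symm ((x : H), 0) ∈ (naimarkK (T†)).domain := by
  refine mem_Kdom.mpr ?_
  simp only [WithLp.linearEquiv_apply, Equiv.apply_symm_apply]
  exact ⟨(hTA hdense hsymm).1 x.2, zero_mem _,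
    by simpa using (hT_le_AA hdense hsymm).1 x.2⟩

theorem mem2 (x : T.domain) :
    (WithLp.equiv 2 (H × H)).symm (0, (x : H)) ∈ (naimarkK (T†)).domain := by
  refine mem_Kdom.mpr ?_
  simp only [WithLp.linearEquiv_apply, Equiv.apply_symm_apply]
  exact ⟨zero_mem _, (hTA hdense hsymm).1 x.2,
    by simpa using (hT_le_AA hdense hsymm).1 x.2⟩

omit hdense hsymm in
theorem mem3 (w : (T†).domain) :
    (WithLp.equiv 2 (H × H)).symm ((w : H), -(w : H)) ∈ (naimarkK (T†)).domain := by
  refine mem_Kdom.mpr ?_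
  simp only [WithLp.linearEquiv_apply, Equiv.apply_symm_apply]
  exact ⟨w.2, neg_mem w.2, by simpa using zero_mem _⟩

theorem hKdense : Dense ((naimarkK (T†)).domain : Set (WithLp 2 (H × H))) := by
  have h : Dense (WithLp.ofLp ⁻¹' ((T.domain : Set H) ×ˢ (T.domain : Set H))) :=
    (hdense.prod hdense).preimage (WithLp.homeomorphProd 2 H H).isOpenMap
  refine Dense.mono ?_ h
  rintro p ⟨ha, hb⟩
  refine mem_Kdom.mpr ?_
  exact ⟨(hTA hdense hsymm).1 ha, (hTA hdense hsymm).1 hb,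
    (hT_le_AA hdense hsymm).1 (add_mem ha hb)⟩

theorem naimark_adj_le : (naimarkK (T†))† ≤ naimarkK (T†) := by
  have hform := adjoint_isFormalAdjoint (hKdense hdense hsymm)
  have hmem : ∀ p : ((naimarkK (T†))†).domain,
      (p : WithLp 2 (H × H)).fst ∈ (T†).domain ∧
      (p : WithLp 2 (H × H)).snd ∈ (T†).domain ∧
      (p : WithLp 2 (H × H)).fst + (p : WithLp 2 (H × H)).snd ∈ ((T†)†).domain ∧
      ∀ hmem : (p : WithLp 2 (H × H)) ∈ (naimarkK (T†)).domain,
        naimarkK (T†) ⟨(p : WithLp 2 (H × H)), hmem⟩ = (naimarkK (T†))† p := by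
    intro p
    -- component computations
    have c1 : ∀ x : T.domain,
        ⟪((naimarkK (T†))† p).fst, (x : H)⟫ = ⟪(p : WithLp 2 (H × H)).fst, T x⟫ := by
      intro x
      have h := hform p ⟨_, mem1 hdense hsymm x⟩
      rw [naimarkK_apply, WithLp.prod_inner_apply, WithLp.prod_inner_apply] at h
      have e1 : auxFst (T†) (⟨_, mem1 hdense hsymm x⟩ : (naimarkK (T†)).domain)
          = ⟨(x : H), (hTA hdense hsymm).1 x.2⟩ := Subtype.ext rfl
      have e2 : auxSnd (T†) (⟨_, mem1 hdense hsymm x⟩ : (naimarkK (T†)).domain)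
          = 0 := Subtype.ext rfl
      rw [e1, e2, LinearPMap.map_zero, ← (hTA hdense hsymm).2
        (x := x) (y := ⟨(x : H), (hTA hdense hsymm).1 x.2⟩) rfl] at h
      simpa using h
    have c2 : ∀ x : T.domain,
        ⟪((naimarkK (T†))† p).snd, (x : H)⟫ = ⟪(p : WithLp 2 (H × H)).snd, -(T x)⟫ := by
      intro x
      have h := hform p ⟨_, mem2 hdense hsymm x⟩
      rw [naimarkK_apply, WithLp.prod_inner_apply, WithLp.prod_inner_apply] at h
      have e1 : auxFst (T†) (⟨_, mem2 hdense hsymm x⟩ : (naimarkK (T†)).domain)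
          = 0 := Subtype.ext rfl
      have e2 : auxSnd (T†) (⟨_, mem2 hdense hsymm x⟩ : (naimarkK (T†)).domain)
          = ⟨(x : H), (hTA hdense hsymm).1 x.2⟩ := Subtype.ext rfl
      rw [e1, e2, LinearPMap.map_zero, ← (hTA hdense hsymm).2
        (x := x) (y := ⟨(x : H), (hTA hdense hsymm).1 x.2⟩) rfl] at h
      simpa using h
    have h_a : (p : WithLp 2 (H × H)).fst ∈ (T†).domain :=
      mem_adjoint_domain_of_exists _ ⟨((naimarkK (T†))† p).fst, fun x => c1 x⟩
    have h_b : (p : WithLp 2 (H × H)).snd ∈ (T†).domain :=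
      mem_adjoint_domain_of_exists _ ⟨-((naimarkK (T†))† p).snd, fun x => by
        rw [inner_neg_left, c2 x, inner_neg_right, neg_neg]⟩
    have v_a : T† ⟨(p : WithLp 2 (H × H)).fst, h_a⟩ = ((naimarkK (T†))† p).fst :=
      adjoint_apply_eq hdense _ fun x => c1 x
    have v_b : T† ⟨(p : WithLp 2 (H × H)).snd, h_b⟩ = -((naimarkK (T†))† p).snd :=
      adjoint_apply_eq hdense _ fun x => by
        rw [inner_neg_left, c2 x, inner_neg_right, neg_neg]
    have c3 : ∀ w : (T†).domain,
        ⟪((naimarkK (T†))† p).fst - ((naimarkK (T†))† p).snd, (w : H)⟫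
          = ⟪(p : WithLp 2 (H × H)).fst + (p : WithLp 2 (H × H)).snd, T† w⟫ := by
      intro w
      have h := hform p ⟨_, mem3 w⟩
      rw [naimarkK_apply, WithLp.prod_inner_apply, WithLp.prod_inner_apply] at h
      have e1 : auxFst (T†) (⟨_, mem3 w⟩ : (naimarkK (T†)).domain) = w := Subtype.ext rfl
      have e2 : auxSnd (T†) (⟨_, mem3 w⟩ : (naimarkK (T†)).domain) = -w := Subtype.ext rfl
      rw [e1, e2, LinearPMap.map_neg] at h
      simp only [WithLp.linearEquiv_symm_apply, WithLp.toLp_fst, WithLp.toLp_snd, WithLp.equiv_symm_apply, AddEquiv.invFun_eq_symm, WithLp.coe_symm_addEquiv, WithLp.ofLp_fst, WithLp.ofLp_snd, AddEquiv.toFun_eq_coe, WithLp.coe_addEquiv, WithLp.equiv_apply,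
        neg_neg, inner_neg_right, inner_sub_left, inner_add_left] at h ⊢
      linear_combination h
    have h_c : (p : WithLp 2 (H × H)).fst + (p : WithLp 2 (H × H)).snd ∈ ((T†)†).domain :=
      mem_adjoint_domain_of_exists _
        ⟨((naimarkK (T†))† p).fst - ((naimarkK (T†))† p).snd, fun w => c3 w⟩
    refine ⟨h_a, h_b, h_c, ?_⟩
    intro hmem
    rw [naimarkK_apply]
    have e1 : auxFst (T†) (⟨(p : WithLp 2 (H × H)), hmem⟩ : (naimarkK (T†)).domain)
        = ⟨(p : WithLp 2 (H × H)).fst, h_a⟩ := Subtype.ext rfl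
    have e2 : auxSnd (T†) (⟨(p : WithLp 2 (H × H)), hmem⟩ : (naimarkK (T†)).domain)
        = ⟨(p : WithLp 2 (H × H)).snd, h_b⟩ := Subtype.ext rfl
    rw [e1, e2, v_a, v_b, neg_neg]
    rw [show (((((naimarkK (T†))† p) : WithLp 2 (H × H))).fst,
        ((((naimarkK (T†))† p) : WithLp 2 (H × H))).snd)
        = WithLp.linearEquiv 2 ℂ (H × H) ((naimarkK (T†))† p) from rfl,
      LinearEquiv.symm_apply_apply]
  constructor
  · intro z hz
    obtain ⟨h_a, h_b, h_c, -⟩ := hmem ⟨z, hz⟩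
    exact mem_Kdom.mpr ⟨h_a, h_b, h_c⟩
  · intro x y hxy
    obtain ⟨h_a, h_b, h_c, hval⟩ := hmem x
    have : y = ⟨(x : WithLp 2 (H × H)), by rw [hxy]; exact y.2⟩ := Subtype.ext hxy.symm
    rw [this, hval]

theorem naimark_isSelfAdjoint : IsSelfAdjoint (naimarkK (T†)) :=
  isSelfAdjoint_def.mpr (le_antisymm (naimark_adj_le hdense hsymm)
    ((naimark_isSymm hdense hsymm).le_adjoint (hKdense hdense hsymm)))

theorem naimark_mem (u : T.domain) : (iota ((u : H)) : WithLp 2 (H × H))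
    ∈ (naimarkK (T†)).domain := mem1 hdense hsymm u

theorem naimark_ext (u : T.domain) (hu : (iota ((u : H)) : WithLp 2 (H × H))
    ∈ (naimarkK (T†)).domain) :
    naimarkK (T†) ⟨iota ((u : H)), hu⟩ = iota (T u) := by
  rw [naimarkK_apply]
  have e1 : auxFst (T†) (⟨iota ((u : H)), hu⟩ : (naimarkK (T†)).domain)
      = ⟨(u : H), (hTA hdense hsymm).1 u.2⟩ := Subtype.ext rfl
  have e2 : auxSnd (T†) (⟨iota ((u : H)), hu⟩ : (naimarkK (T†)).domain)
      = 0 := Subtype.ext rfl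
  have hv : T† ⟨(u : H), (hTA hdense hsymm).1 u.2⟩ = T u :=
    ((hTA hdense hsymm).2 (x := u) (y := ⟨(u : H), (hTA hdense hsymm).1 u.2⟩) rfl).symm
  rw [e1, e2, LinearPMap.map_zero, hv, iota_apply]
  simp

end
end NaimarkProof

open NaimarkProof in
/-- Naimark's theorem (Proposition 3.4): a densely defined symmetric operator `T` on a
separable complex Hilbert space whose deficiency indices are unequal admits a
self-adjoint extension `K` on a larger Hilbert space `Ĥ ⊇ H`. -/
theorem naimark_selfadjoint_extension
    {H : Type u} [NormedAddCommGroup H] [InnerProductSpace ℂ H] [CompleteSpace H]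
    [TopologicalSpace.SeparableSpace H]
    (T : H →ₗ.[ℂ] H) (hdense : Dense (T.domain : Set H))
    (hsymm : ∀ x y : T.domain, (inner ℂ (T x) (y : H) : ℂ) = inner ℂ (x : H) (T y))
    -- the deficiency indices are unequal
    (hdef : Module.rank ℂ
        ((LinearMap.range (T.toFun - Complex.I • T.domain.subtype))ᗮ) ≠
      Module.rank ℂ
        ((LinearMap.range (T.toFun + Complex.I • T.domain.subtype))ᗮ)) :
    ∃ (H' : Type u) (_ : NormedAddCommGroup H') (_ : InnerProductSpace ℂ H')
      (_ : CompleteSpace H') (ι : H →ₗᵢ[ℂ] H') (K : H' →ₗ.[ℂ] H'),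
      IsSelfAdjoint K ∧
      (∀ u : T.domain, ι (u : H) ∈ K.domain) ∧
      (∀ (u : T.domain) (hu : ι (u : H) ∈ K.domain), K ⟨ι (u : H), hu⟩ = ι (T u)) := by
  exact ⟨WithLp 2 (H × H), inferInstance, inferInstance, inferInstance, iota,
    naimarkK ((LinearPMap.adjoint T)),
    naimark_isSelfAdjoint hdense hsymm,
    fun u => naimark_mem hdense hsymm u,
    fun u hu => naimark_ext hdense hsymm u hu⟩
end

section
/- Let δ be a symmetric derivation on a *-subalgebra D of B(H) for a complex Hilbert space H. Let E ∈ D be a rank-one orthogonal projection and let Ω be a unit vector with EΩ = Ω; set ω(x) = ⟨Ω, xΩ⟩. Then for every A ∈ D one has |ω(δ(A))| ≤ 3·‖δ(E)‖·(ω(A*A) + ω(AA*))^{1/2}. -/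
set_option maxHeartbeats 1000000


/-- The key estimate in the proof of Lemma 3.3: if `δ` is a symmetric derivation on a
`*`-subalgebra `D ⊆ B(H)`, `E ∈ D` is a rank-one orthogonal projection and `Ω` is a unit
vector with `EΩ = Ω`, then for `ω(x) = ⟨Ω, xΩ⟩` one has
`|ω(δ(A))| ≤ 3 ‖δ(E)‖ (ω(A*A) + ω(AA*))^{1/2}` for every `A ∈ D`. -/
theorem state_bound_of_rank_one_projection
    {H : Type*} [NormedAddCommGroup H] [InnerProductSpace ℂ H] [CompleteSpace H]
    (D : NonUnitalStarSubalgebra ℂ (H →L[ℂ] H)) (δ : D →ₗ[ℂ] (H →L[ℂ] H))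
    (hLeib : ∀ A B : D, δ (A * B) = δ A * (B : H →L[ℂ] H) + (A : H →L[ℂ] H) * δ B)
    (hSym : ∀ A : D, δ (star A) = star (δ A))
    (E : D) (hIdem : IsIdempotentElem (E : H →L[ℂ] H))
    (hSA : IsSelfAdjoint (E : H →L[ℂ] H))
    (hrank : Module.finrank ℂ (LinearMap.range ((E : H →L[ℂ] H) : H →ₗ[ℂ] H)) = 1)
    (Ω : H) (hΩ : ‖Ω‖ = 1) (hEΩ : (E : H →L[ℂ] H) Ω = Ω) :
    ∀ A : D, ‖(inner ℂ Ω (δ A Ω) : ℂ)‖ ≤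
      3 * ‖δ E‖ * Real.sqrt ((inner ℂ Ω (((star A * A : D) : H →L[ℂ] H) Ω) : ℂ).re +
        (inner ℂ Ω (((A * star A : D) : H →L[ℂ] H) Ω) : ℂ).re) := by
  intro A
  set e : H →L[ℂ] H := (E : H →L[ℂ] H) with he
  set a : H →L[ℂ] H := (A : H →L[ℂ] H) with ha
  have hΩne : Ω ≠ 0 := by intro h; rw [h, norm_zero] at hΩ; norm_num at hΩ
  have hfin : FiniteDimensional ℂ (LinearMap.range (e : H →ₗ[ℂ] H)) :=
    Module.finite_of_finrank_eq_succ hrank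
  have hΩmem : Ω ∈ LinearMap.range (e : H →ₗ[ℂ] H) := ⟨Ω, hEΩ⟩
  have hspan : (ℂ ∙ Ω) = LinearMap.range (e : H →ₗ[ℂ] H) := by
    apply Submodule.eq_of_le_of_finrank_le
    · exact (Submodule.span_singleton_le_iff_mem _ _).2 hΩmem
    · rw [hrank, finrank_span_singleton hΩne]
  have headj : ∀ x y : H, (inner ℂ (e x) y : ℂ) = inner ℂ x (e y) := by
    intro x y
    conv_lhs => rw [← hSA]
    rw [ContinuousLinearMap.star_eq_adjoint, ContinuousLinearMap.adjoint_inner_left]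
  have hErank : ∀ ξ : H, e ξ = (inner ℂ Ω ξ : ℂ) • Ω := by
    intro ξ
    have : e ξ ∈ (ℂ ∙ Ω) := hspan ▸ LinearMap.mem_range_self (e : H →ₗ[ℂ] H) ξ
    obtain ⟨c, hc⟩ := Submodule.mem_span_singleton.1 this
    have hcval : (inner ℂ Ω (e ξ) : ℂ) = c := by
      rw [← hc, inner_smul_right, inner_self_eq_norm_sq_to_K, hΩ]
      norm_num
    rw [← hc, ← hcval, ← headj, hEΩ]
  have hEstar : star E = E := Subtype.coe_injective hSA
  have hδEsa : IsSelfAdjoint (δ E) := by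
    rw [IsSelfAdjoint, ← hSym, hEstar]
  have hEE : E * E = E := Subtype.coe_injective hIdem
  have hd : δ E = δ E * e + e * δ E := by
    conv_lhs => rw [← hEE, hLeib]
  have hzero : e * δ E * e = 0 := by
    have h4 : e * δ E = e * δ E * e + e * δ E := by
      conv_lhs => rw [hd]
      rw [mul_add, ← mul_assoc, ← mul_assoc, hIdem]
    exact right_eq_add.mp h4
  have hωδE : (inner ℂ Ω (δ E Ω) : ℂ) = 0 := by
    have h5 : (inner ℂ Ω (δ E Ω) : ℂ) = inner ℂ Ω ((e * δ E * e) Ω) := by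
      rw [ContinuousLinearMap.mul_apply, ContinuousLinearMap.mul_apply, hEΩ, ← headj, hEΩ]
    rw [h5, hzero]
    simp
  set c : ℂ := inner ℂ Ω (a Ω) with hc
  have hEAE : E * A * E = c • E := by
    apply Subtype.coe_injective
    show e * a * e = c • e
    ext ξ
    simp only [ContinuousLinearMap.mul_apply, ContinuousLinearMap.smul_apply]
    rw [hErank ξ, map_smul, map_smul, hErank (a Ω), smul_comm]
  have h1 : c • δ E = δ E * a * e + (e * δ A * e + e * a * δ E) := by
    have h2 : δ (E * A * E) = c • δ E := by rw [hEAE, map_smul]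
    rw [← h2, hLeib (E * A) E, hLeib E A]
    show (δ E * a + e * δ A) * e + (e * a) * δ E = δ E * a * e + (e * δ A * e + e * a * δ E)
    noncomm_ring
  have hkey : e * δ A * e = c • δ E - δ E * a * e - e * a * δ E := by
    rw [eq_sub_iff_add_eq, eq_sub_iff_add_eq, h1]
    abel
  have hmain : (inner ℂ Ω (δ A Ω) : ℂ) =
      - inner ℂ Ω (δ E (a Ω)) - inner ℂ Ω (a (δ E Ω)) := by
    have h0 : (inner ℂ Ω (δ A Ω) : ℂ) = inner ℂ Ω ((e * δ A * e) Ω) := by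
      rw [ContinuousLinearMap.mul_apply, ContinuousLinearMap.mul_apply, hEΩ, ← headj, hEΩ]
    rw [h0, hkey]
    simp only [ContinuousLinearMap.sub_apply, ContinuousLinearMap.smul_apply,
      ContinuousLinearMap.mul_apply, inner_sub_right, inner_smul_right, hωδE, hEΩ]
    have h3 : (inner ℂ Ω (e (a (δ E Ω))) : ℂ) = inner ℂ Ω (a (δ E Ω)) := by
      rw [← headj, hEΩ]
    rw [h3]
    ring
  -- norm bounds
  have hδEΩ : ‖δ E Ω‖ ≤ ‖δ E‖ := by
    calc ‖δ E Ω‖ ≤ ‖δ E‖ * ‖Ω‖ := (δ E).le_opNorm Ω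
    _ = ‖δ E‖ := by rw [hΩ, mul_one]
  have hsa' : ∀ x y : H, (inner ℂ (δ E x) y : ℂ) = inner ℂ x (δ E y) := by
    intro x y
    conv_lhs => rw [← hδEsa]
    rw [ContinuousLinearMap.star_eq_adjoint, ContinuousLinearMap.adjoint_inner_left]
  have hstarA : ((star A : D) : H →L[ℂ] H) = ContinuousLinearMap.adjoint a := rfl
  have hre1 : (inner ℂ Ω (((star A * A : D) : H →L[ℂ] H) Ω) : ℂ).re = ‖a Ω‖ ^ 2 := by
    show (inner ℂ Ω ((ContinuousLinearMap.adjoint a) (a Ω)) : ℂ).re = ‖a Ω‖ ^ 2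
    rw [ContinuousLinearMap.adjoint_inner_right]
    exact_mod_cast congrArg Complex.re (inner_self_eq_norm_sq_to_K (𝕜 := ℂ) (a Ω))
  have hre2 : (inner ℂ Ω (((A * star A : D) : H →L[ℂ] H) Ω) : ℂ).re
      = ‖ContinuousLinearMap.adjoint a Ω‖ ^ 2 := by
    show (inner ℂ Ω (a ((ContinuousLinearMap.adjoint a) Ω)) : ℂ).re = _
    rw [← ContinuousLinearMap.adjoint_inner_left]
    exact_mod_cast congrArg Complex.re (inner_self_eq_norm_sq_to_K (𝕜 := ℂ)
      (ContinuousLinearMap.adjoint a Ω))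
  rw [hre1, hre2, hmain]
  set u := ‖a Ω‖
  set v := ‖ContinuousLinearMap.adjoint a Ω‖
  have hb1 : ‖(inner ℂ Ω (δ E (a Ω)) : ℂ)‖ ≤ ‖δ E‖ * u := by
    rw [← hsa' Ω (a Ω)]
    calc ‖(inner ℂ (δ E Ω) (a Ω) : ℂ)‖ ≤ ‖δ E Ω‖ * ‖a Ω‖ := norm_inner_le_norm _ _
    _ ≤ ‖δ E‖ * u := by gcongr
  have hb2 : ‖(inner ℂ Ω (a (δ E Ω)) : ℂ)‖ ≤ ‖δ E‖ * v := by
    rw [← ContinuousLinearMap.adjoint_inner_left]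
    calc ‖(inner ℂ (ContinuousLinearMap.adjoint a Ω) (δ E Ω) : ℂ)‖
        ≤ ‖ContinuousLinearMap.adjoint a Ω‖ * ‖δ E Ω‖ := norm_inner_le_norm _ _
    _ ≤ v * ‖δ E‖ := by gcongr
    _ = ‖δ E‖ * v := mul_comm _ _
  have htri : ‖(- inner ℂ Ω (δ E (a Ω)) - inner ℂ Ω (a (δ E Ω)) : ℂ)‖
      ≤ ‖δ E‖ * u + ‖δ E‖ * v := by
    calc ‖(- inner ℂ Ω (δ E (a Ω)) - inner ℂ Ω (a (δ E Ω)) : ℂ)‖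
        ≤ ‖(- inner ℂ Ω (δ E (a Ω)) : ℂ)‖ + ‖(inner ℂ Ω (a (δ E Ω)) : ℂ)‖ := norm_sub_le _ _
    _ = ‖(inner ℂ Ω (δ E (a Ω)) : ℂ)‖ + ‖(inner ℂ Ω (a (δ E Ω)) : ℂ)‖ := by rw [norm_neg]
    _ ≤ ‖δ E‖ * u + ‖δ E‖ * v := add_le_add hb1 hb2
  refine htri.trans ?_
  have hu : (0:ℝ) ≤ u := norm_nonneg _
  have hv : (0:ℝ) ≤ v := norm_nonneg _
  have hN : (0:ℝ) ≤ ‖δ E‖ := norm_nonneg _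
  have hsq : u + v ≤ 3 * Real.sqrt (u ^ 2 + v ^ 2) := by
    have h6 : u ≤ Real.sqrt (u ^ 2 + v ^ 2) := by
      calc u = Real.sqrt (u ^ 2) := (Real.sqrt_sq hu).symm
      _ ≤ _ := Real.sqrt_le_sqrt (by nlinarith)
    have h7 : v ≤ Real.sqrt (u ^ 2 + v ^ 2) := by
      calc v = Real.sqrt (v ^ 2) := (Real.sqrt_sq hv).symm
      _ ≤ _ := Real.sqrt_le_sqrt (by nlinarith)
    have h8 : (0:ℝ) ≤ Real.sqrt (u ^ 2 + v ^ 2) := Real.sqrt_nonneg _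
    linarith
  calc ‖δ E‖ * u + ‖δ E‖ * v = ‖δ E‖ * (u + v) := by ring
  _ ≤ ‖δ E‖ * (3 * Real.sqrt (u ^ 2 + v ^ 2)) := by gcongr
  _ = 3 * ‖δ E‖ * Real.sqrt (u ^ 2 + v ^ 2) := by ring
end

section
/- Let K and K' be complex Hilbert spaces, let L be a bounded self-adjoint operator on K with ⟨x, Lx⟩ ≤ 0 for all x ∈ K, and let R : K → K' be a bounded operator with R*R = −2L. Then for every integer n ≥ 1 and every ω ∈ K one has ‖R (I − L/n)^{-1} ω‖ ≤ ‖(−2L)^{1/2} ω‖, where (−2L)^{1/2} is the positive square root of the positive operator −2L. -/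
open scoped ComplexOrder

/-- Let `L` be a bounded self-adjoint operator on a complex Hilbert space `K` with
`⟨x, Lx⟩ ≤ 0`, and let `R : K → K'` be bounded with `R*R = -2L`.  Then for every `n ≥ 1`
and every `ω`, `‖R (I - L/n)⁻¹ ω‖ ≤ ‖(-2L)^{1/2} ω‖`, where the square root is the
(unique) positive square root `S` of the positive operator `-2L`.  (Moreover `I - L/n`
is invertible, so `Ring.inverse` is its genuine inverse.) -/
theorem norm_R_resolvent_le
    {K K' : Type*} [NormedAddCommGroup K] [InnerProductSpace ℂ K] [CompleteSpace K]
    [NormedAddCommGroup K'] [InnerProductSpace ℂ K'] [CompleteSpace K']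
    (L : K →L[ℂ] K) (hL : IsSelfAdjoint L)
    (hneg : ∀ x : K, (inner ℂ x (L x) : ℂ) ≤ 0)
    (R : K →L[ℂ] K')
    (hR : (ContinuousLinearMap.adjoint R).comp R = (-2 : ℂ) • L)
    (S : K →L[ℂ] K) (hS : IsSelfAdjoint S)
    (hSpos : ∀ x : K, 0 ≤ (inner ℂ x (S x) : ℂ))
    (hSsq : S * S = (-2 : ℂ) • L) :
    ∀ n : ℕ, 1 ≤ n → ∀ ω : K,
      IsUnit ((1 : K →L[ℂ] K) - ((n : ℂ))⁻¹ • L) ∧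
        ‖R (Ring.inverse ((1 : K →L[ℂ] K) - ((n : ℂ))⁻¹ • L) ω)‖ ≤ ‖S ω‖ := by
  intro n hn ω
  have hn0 : (n : ℝ) ≠ 0 := by positivity
  have hnC : (n : ℂ) ≠ 0 := by exact_mod_cast (by positivity : ((n:ℝ):ℂ) ≠ 0)
  set r : ℝ := (2 * (n : ℝ))⁻¹ with hr
  have hr0 : 0 ≤ r := by positivity
  set B : K →L[ℂ] K := (-2 : ℂ) • L with hBdef
  have hBsa : IsSelfAdjoint B :=
    IsSelfAdjoint.smul (isSelfAdjoint_iff.mpr (by simp [Complex.star_def, map_neg])) hL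
  have hBsym : (B : K →ₗ[ℂ] K).IsSymmetric := hBsa.isSymmetric
  have hBpos : ∀ x : K, 0 ≤ (inner ℂ x (B x) : ℂ) := by
    intro x
    have hBL : (inner ℂ x (B x) : ℂ) = (-2 : ℂ) * inner ℂ x (L x) := by
      rw [hBdef]; simp [inner_smul_right]
    rw [hBL]
    have h := hneg x
    rw [Complex.le_def] at h ⊢
    obtain ⟨h1, h2⟩ := h
    simp only [Complex.zero_re, Complex.zero_im, Complex.mul_re, Complex.mul_im] at *
    constructor
    · simp [h2]; nlinarith
    · simp [h2]
  -- T rewrite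
  have h2r : ((r : ℂ)) * (-2) = -((n : ℂ))⁻¹ := by
    rw [hr]
    push_cast
    field_simp
  have hTeq : (1 : K →L[ℂ] K) - ((n : ℂ))⁻¹ • L = 1 + (r : ℂ) • B := by
    rw [hBdef, smul_smul, h2r, sub_eq_add_neg, neg_smul]
  have hrsa : ((r : ℂ)).im = 0 := by simp
  -- positivity of r • B
  have hrB : (0 : K →L[ℂ] K) ≤ (r : ℂ) • B := by
    rw [ContinuousLinearMap.nonneg_iff_isPositive, ContinuousLinearMap.isPositive_def']
    refine ⟨IsSelfAdjoint.smul (isSelfAdjoint_iff.mpr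
      (by rw [Complex.star_def, Complex.conj_ofReal])) hBsa, ?_⟩
    intro x
    rw [ContinuousLinearMap.reApplyInnerSelf]
    have h1 : (((r : ℂ) • B) x) = (r : ℂ) • (B x) := rfl
    rw [h1, inner_smul_left, Complex.conj_ofReal]
    have h2 : (inner ℂ (B x) x : ℂ) = inner ℂ x (B x) := (hBsym x x)
    rw [RCLike.re_to_complex, h2]
    have h3 := (Complex.nonneg_iff.mp (hBpos x)).1
    have h4 := (Complex.nonneg_iff.mp (hBpos x)).2
    simp only [Complex.mul_re, Complex.ofReal_re, Complex.ofReal_im, ← h4]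
    simp
    positivity
  have hT : IsUnit ((1 : K →L[ℂ] K) - ((n : ℂ))⁻¹ • L) := by
    rw [hTeq]
    exact CStarAlgebra.isUnit_of_le 1 (le_add_of_nonneg_right hrB)
  refine ⟨hT, ?_⟩
  set T : K →L[ℂ] K := (1 : K →L[ℂ] K) - ((n : ℂ))⁻¹ • L with hTdef
  have hTeq' : T = 1 + (r : ℂ) • B := hTeq
  clear_value T
  clear hTdef
  clear_value B
  set y : K := Ring.inverse T ω with hy
  have h2 : T y = ω := by
    have h1 : T * Ring.inverse T = 1 := Ring.mul_inverse_cancel T hT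
    have := congrArg (fun f : K →L[ℂ] K => f ω) h1
    simpa [ContinuousLinearMap.mul_apply] using this
  have hTy : y + (r : ℂ) • B y = ω := by
    rw [← h2, hTeq']
    simp [ContinuousLinearMap.add_apply]
  -- ‖R y‖² = re ⟪y, B y⟫
  have hRy : ‖R y‖ ^ 2 = ((inner ℂ y (B y) : ℂ)).re := by
    rw [@norm_sq_eq_re_inner ℂ, RCLike.re_to_complex]
    congr 1
    rw [← ContinuousLinearMap.adjoint_inner_right]
    congr 1
    have := congrArg (fun f : K →L[ℂ] K => f y) hR
    simpa [ContinuousLinearMap.comp_apply] using this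
  -- ‖S ω‖² = re ⟪ω, B ω⟫
  have hSω : ‖S ω‖ ^ 2 = ((inner ℂ ω (B ω) : ℂ)).re := by
    rw [@norm_sq_eq_re_inner ℂ, RCLike.re_to_complex]
    congr 1
    rw [← ContinuousLinearMap.adjoint_inner_right S ω (S ω),
      ContinuousLinearMap.isSelfAdjoint_iff'.mp hS]
    congr 1
    have := congrArg (fun f : K →L[ℂ] K => f ω) hSsq
    simpa [ContinuousLinearMap.mul_apply] using this
  -- main quadratic inequality, in ℂ with the complex order
  have hsym : (inner ℂ y (B (B y)) : ℂ) = inner ℂ (B y) (B y) := (hBsym y (B y)).symm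
  have hexp : (inner ℂ ω (B ω) : ℂ)
      = inner ℂ y (B y) + ((r : ℂ) * inner ℂ (B y) (B y) + (r : ℂ) * inner ℂ (B y) (B y)
        + (r : ℂ) * (r : ℂ) * inner ℂ (B y) (B (B y))) := by
    rw [← hTy, map_add, map_smul]
    rw [inner_add_left, inner_add_right, inner_add_right]
    rw [inner_smul_left, inner_smul_right, inner_smul_left, inner_smul_right]
    rw [Complex.conj_ofReal, hsym]
    ring
  have hI1 : (0 : ℂ) ≤ inner ℂ (B y) (B y) := by
    rw [Complex.nonneg_iff]
    constructor
    · rw [← RCLike.re_to_complex]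
      exact inner_self_nonneg
    · rw [← RCLike.im_to_complex, inner_self_im]
  have hI2 : (0 : ℂ) ≤ inner ℂ (B y) (B (B y)) := hBpos (B y)
  have hrC : (0 : ℂ) ≤ (r : ℂ) := Complex.zero_le_real.mpr hr0
  have key : (inner ℂ y (B y) : ℂ) ≤ inner ℂ ω (B ω) := by
    rw [hexp]
    refine le_add_of_nonneg_right ?_
    have t1 : (0:ℂ) ≤ (r : ℂ) * inner ℂ (B y) (B y) := mul_nonneg hrC hI1
    have t2 : (0:ℂ) ≤ (r : ℂ) * (r : ℂ) * inner ℂ (B y) (B (B y)) :=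
      mul_nonneg (mul_nonneg hrC hrC) hI2
    exact add_nonneg (add_nonneg t1 t1) t2
  have keyre : ((inner ℂ y (B y) : ℂ)).re ≤ ((inner ℂ ω (B ω) : ℂ)).re := (Complex.le_def.mp key).1
  have hsq : ‖R y‖ ^ 2 ≤ ‖S ω‖ ^ 2 := by rw [hRy, hSω]; exact keyre
  have hnn1 : (0:ℝ) ≤ ‖R y‖ := norm_nonneg _
  have hnn2 : (0:ℝ) ≤ ‖S ω‖ := norm_nonneg _
  nlinarith
end
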